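/- Let X be a real Hilbert space with inner product ⟨·,·⟩, let M : X → X be a continuous, symmetric, strongly positive definite, invertible linear operator, A : X → 2^X maximally monotone, and c > 0. Then for every x, η ∈ X there is a unique pair (y, ξ) ∈ X × X with ξ ∈ A(y) and η = cMξ + y − x; moreover y = (I + cMA)⁻¹(x + η) and ξ = (cM)⁻¹η − (cM)⁻¹(y − x). -/

import Mathlib

open RealInnerProductSpace

section PLSAux

open Finset

variable {X : Type*} [NormedAddCommGroup X] [InnerProductSpace ℝ X]

/-- Weighted variance-type identity. -/
lemma pls_wsum_identity {ι : Type*} (t : Finset ι) (w : ι → ℝ) (v : ι → X)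
    (hw : ∑ i ∈ t, w i = 1) :
    ∑ i ∈ t, w i * ‖v i‖ ^ 2 = ‖∑ i ∈ t, w i • v i‖ ^ 2
      + 2⁻¹ * ∑ i ∈ t, ∑ j ∈ t, w i * w j * ‖v i - v j‖ ^ 2 := by
  have hnorm : ∀ u : X, ‖u‖ ^ 2 = ⟪u, u⟫ := fun u => (real_inner_self_eq_norm_sq u).symm
  have h2 : ‖∑ i ∈ t, w i • v i‖ ^ 2 = ∑ i ∈ t, w i * ⟪v i, ∑ j ∈ t, w j • v j⟫ := by
    rw [hnorm, sum_inner]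
    exact Finset.sum_congr rfl fun i _ => real_inner_smul_left _ _ _
  have h3 : ∀ i, ⟪v i, ∑ j ∈ t, w j • v j⟫ = ∑ j ∈ t, w j * ⟪v i, v j⟫ := fun i => by
    rw [inner_sum]
    exact Finset.sum_congr rfl fun j _ => real_inner_smul_right _ _ _
  have h4 : ∀ i ∈ t, ∑ j ∈ t, w i * w j * ‖v i - v j‖ ^ 2
      = w i * ‖v i‖ ^ 2 + w i * (∑ j ∈ t, w j * ‖v j‖ ^ 2)
        - 2 * (w i * ∑ j ∈ t, w j * ⟪v i, v j⟫) := by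
    intro i _
    have e1 : ∀ j ∈ t, w i * w j * ‖v i - v j‖ ^ 2
        = w i * (w j * ‖v i‖ ^ 2) + w i * (w j * ‖v j‖ ^ 2)
          - 2 * (w i * (w j * ⟪v i, v j⟫)) := by
      intro j _
      have e : ‖v i - v j‖ ^ 2 = ‖v i‖ ^ 2 + ‖v j‖ ^ 2 - 2 * ⟪v i, v j⟫ := by
        rw [hnorm, hnorm, hnorm, inner_sub_sub_self, real_inner_comm (v j) (v i)]; ring
      rw [e]; ring
    rw [Finset.sum_congr rfl e1, Finset.sum_sub_distrib, Finset.sum_add_distrib]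
    simp only [← Finset.mul_sum]
    rw [show (∑ j ∈ t, w j * ‖v i‖ ^ 2) = (∑ j ∈ t, w j) * ‖v i‖ ^ 2 from
      (Finset.sum_mul ..).symm, hw]
    ring
  rw [Finset.sum_congr rfl h4, Finset.sum_sub_distrib, Finset.sum_add_distrib]
  simp only [← Finset.mul_sum]
  rw [show (∑ i ∈ t, w i * (∑ j ∈ t, w j * ‖v j‖ ^ 2)) =
      (∑ i ∈ t, w i) * (∑ j ∈ t, w j * ‖v j‖ ^ 2) from (Finset.sum_mul ..).symm, hw, h2]
  simp only [h3]
  ring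

/-- Variational inequality for a nearest point of a convex set. -/
lemma pls_proj_ineq {C : Set X} (hC : Convex ℝ C) {q p : X} (hp : p ∈ C)
    (hmin : ∀ k ∈ C, ‖q - p‖ ≤ ‖q - k‖) : ∀ k ∈ C, ⟪q - p, k - p⟫ ≤ 0 := by
  intro k hk
  by_contra hcon
  push_neg at hcon
  set δ : ℝ := ⟪q - p, k - p⟫ with hδ
  have hkp : k - p ≠ 0 := by
    intro h
    rw [hδ, h, inner_zero_right] at hcon; exact lt_irrefl 0 hcon
  have hn : 0 < ‖k - p‖ ^ 2 := by
    have := norm_pos_iff.2 hkp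
    positivity
  set t : ℝ := min 1 (δ / ‖k - p‖ ^ 2) with ht
  have ht0 : 0 < t := lt_min one_pos (div_pos hcon hn)
  have ht1 : t ≤ 1 := min_le_left _ _
  have hyC : p + t • (k - p) ∈ C := hC.add_smul_sub_mem hp hk ⟨le_of_lt ht0, ht1⟩
  have hle := hmin _ hyC
  have hexp : ‖q - (p + t • (k - p))‖ ^ 2
      = ‖q - p‖ ^ 2 - 2 * t * δ + t ^ 2 * ‖k - p‖ ^ 2 := by
    have : q - (p + t • (k - p)) = (q - p) - t • (k - p) := by abel
    rw [this, norm_sub_sq_real, real_inner_smul_right, norm_smul, hδ]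
    simp [abs_of_pos ht0]
    ring
  have hsq : ‖q - p‖ ^ 2 ≤ ‖q - (p + t • (k - p))‖ ^ 2 := by
    have := norm_nonneg (q - p)
    nlinarith [hle]
  have htb : t * ‖k - p‖ ^ 2 ≤ δ := by
    rw [ht]
    calc min 1 (δ / ‖k - p‖ ^ 2) * ‖k - p‖ ^ 2 ≤ (δ / ‖k - p‖ ^ 2) * ‖k - p‖ ^ 2 :=
          mul_le_mul_of_nonneg_right (min_le_right _ _) (le_of_lt hn)
      _ = δ := div_mul_cancel₀ _ (ne_of_gt hn)
  nlinarith [hsq, hexp]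

/-- Finite Kirszbraun-type intersection lemma. -/
lemma pls_finite_kirszbraun (s : Finset (X × X)) (z : X)
    (hmono : ∀ p ∈ s, ∀ p' ∈ s, ‖p.2 - p'.2‖ ≤ ‖p.1 - p'.1‖) :
    ∃ q : X, ∀ p ∈ s, ‖q - p.2‖ ≤ ‖z - p.1‖ := by
  classical
  rcases s.eq_empty_or_nonempty with rfl | hs
  · exact ⟨0, by simp⟩
  set g : X × X → X → ℝ := fun p q => ‖q - p.2‖ ^ 2 - ‖z - p.1‖ ^ 2 with hg
  set f : X → ℝ := fun q => s.sup' hs (fun p => g p q) with hf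
  have hfc : Continuous f := by
    apply Continuous.finset_sup'_apply hs
    intro p _
    apply Continuous.sub _ continuous_const
    exact ((continuous_id.sub continuous_const).norm).pow 2
  set K : Set X := convexHull ℝ (Prod.snd '' (s : Set (X × X))) with hK
  have hKcp : IsCompact K := (s.finite_toSet.image _).isCompact_convexHull ℝ
  have hKne : K.Nonempty := by
    obtain ⟨p, hp⟩ := hs
    exact ⟨p.2, subset_convexHull ℝ _ ⟨p, hp, rfl⟩⟩
  obtain ⟨q, hqK, hqmin⟩ := hKcp.exists_isMinOn hKne hfc.continuousOn
  set m : ℝ := f q with hm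
  by_cases hm0 : m ≤ 0
  · refine ⟨q, fun p hp => ?_⟩
    have h1 : g p q ≤ m := Finset.le_sup' (fun p => g p q) hp
    have h2 : ‖q - p.2‖ ^ 2 ≤ ‖z - p.1‖ ^ 2 := by simp only [hg] at h1; linarith
    have := norm_nonneg (q - p.2); have := norm_nonneg (z - p.1)
    nlinarith
  push_neg at hm0
  exfalso
  set act : Finset (X × X) := s.filter (fun p => g p q = m) with hact
  have hact_ne : act.Nonempty := by
    obtain ⟨p, hp, hpe⟩ := Finset.exists_mem_eq_sup' hs (fun p => g p q)
    exact ⟨p, Finset.mem_filter.2 ⟨hp, hpe.symm⟩⟩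
  set tb : Finset X := act.image Prod.snd with htb
  have htb_ne : tb.Nonempty := hact_ne.image _
  set C : Set X := convexHull ℝ (tb : Set X) with hC
  have hCK : C ⊆ K := convexHull_mono (by
    intro y hy
    obtain ⟨p, hp, rfl⟩ := Finset.mem_image.1 (by exact_mod_cast hy)
    exact ⟨p, Finset.mem_filter.1 hp |>.1, rfl⟩)
  -- choice of representative pairs
  have hrep : ∀ y : X, ∃ a : X, y ∈ tb → (a, y) ∈ act := by
    intro y
    by_cases hy : y ∈ tb
    · obtain ⟨p, hp, hpy⟩ := Finset.mem_image.1 hy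
      have hyp : (p.1, y) = p := Prod.ext_iff.2 ⟨rfl, hpy.symm⟩
      exact ⟨p.1, fun _ => by rwa [hyp]⟩
    · exact ⟨0, fun h => absurd h hy⟩
  choose aa haa using hrep
  have hact_s : ∀ p ∈ act, p ∈ s := fun p hp => (Finset.mem_filter.1 hp).1
  have hact_val : ∀ p ∈ act, g p q = m := fun p hp => (Finset.mem_filter.1 hp).2
  by_cases hqC : q ∈ C
  · -- q is a convex combination of active second coordinates
    obtain ⟨w, hw0, hw1, hwq⟩ := Finset.mem_convexHull'.1 hqC
    -- identity applications
    have hid1 := pls_wsum_identity tb w (fun y => q - y) hw1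
    have hid2 := pls_wsum_identity tb w (fun y => z - aa y) hw1
    have hzero : ∑ y ∈ tb, w y • (q - y) = 0 := by
      rw [Finset.sum_congr rfl (fun y _ => smul_sub (w y) q y), Finset.sum_sub_distrib,
        ← Finset.sum_smul, hw1, one_smul, hwq, sub_self]
    rw [hzero, norm_zero] at hid1
    have hval : ∀ y ∈ tb, ‖q - y‖ ^ 2 = ‖z - aa y‖ ^ 2 + m := by
      intro y hy
      have := hact_val _ (haa y hy)
      simp only [hg] at this
      linarith
    have hsum_eq : ∑ y ∈ tb, w y * ‖q - y‖ ^ 2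
        = ∑ y ∈ tb, w y * ‖z - aa y‖ ^ 2 + m := by
      rw [Finset.sum_congr rfl (fun y hy => by rw [hval y hy])]
      rw [Finset.sum_congr rfl (fun y _ => mul_add (w y) _ m), Finset.sum_add_distrib,
        ← Finset.sum_mul, hw1, one_mul]
    have hDD : ∑ y ∈ tb, ∑ y' ∈ tb, w y * w y' * ‖(q - y) - (q - y')‖ ^ 2
        ≤ ∑ y ∈ tb, ∑ y' ∈ tb, w y * w y' * ‖(z - aa y) - (z - aa y')‖ ^ 2 := by
      apply Finset.sum_le_sum
      intro y hy
      apply Finset.sum_le_sum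
      intro y' hy'
      have e1 : (q - y) - (q - y') = y' - y := by abel
      have e2 : (z - aa y) - (z - aa y') = aa y' - aa y := by abel
      rw [e1, e2]
      have hmm : ‖y' - y‖ ≤ ‖aa y' - aa y‖ := by
        have := hmono _ (hact_s _ (haa y' hy')) _ (hact_s _ (haa y hy))
        simpa using this
      have hwy := mul_nonneg (hw0 y hy) (hw0 y' hy')
      have h1 := norm_nonneg (y' - y)
      exact mul_le_mul_of_nonneg_left (pow_le_pow_left₀ h1 hmm 2) hwy
    nlinarith [sq_nonneg ‖∑ y ∈ tb, w y • (z - aa y)‖]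
  · -- projection argument
    have hCcp : IsCompact C := tb.finite_toSet.isCompact_convexHull ℝ
    have hCne : C.Nonempty := htb_ne.to_set.mono (subset_convexHull ℝ _) |>.imp (fun _ h => h)
    obtain ⟨pp, hppC, hppmin⟩ := hCcp.exists_isMinOn hCne
      (continuous_const.dist continuous_id).continuousOn
    have hproj : ∀ k ∈ C, ⟪q - pp, k - pp⟫ ≤ 0 := by
      apply pls_proj_ineq (convex_convexHull ℝ _) hppC
      intro k hk
      have := hppmin hk
      simpa [dist_eq_norm] using this
    set d : X := pp - q with hd
    have hd0 : d ≠ 0 := by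
      intro h
      apply hqC
      have : pp = q := by rwa [hd, sub_eq_zero] at h
      rwa [← this]
    have hdn : 0 < ‖d‖ ^ 2 := by
      have := norm_pos_iff.2 hd0
      positivity
    -- inner product bound for active pairs
    have hactip : ∀ p ∈ act, ⟪q - p.2, d⟫ ≤ -‖d‖ ^ 2 := by
      intro p hp
      have hbC : p.2 ∈ C := subset_convexHull ℝ _ (by
        exact_mod_cast Finset.mem_image.2 ⟨p, hp, rfl⟩)
      have h1 : ⟪q - pp, p.2 - pp⟫ ≤ 0 := hproj _ hbC
      have : q - p.2 = (q - pp) + (pp - p.2) := by abel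
      rw [this, inner_add_left]
      have e1 : ⟪q - pp, d⟫ = -‖d‖ ^ 2 := by
        rw [hd, show q - pp = -(pp - q) from by abel, inner_neg_left,
          real_inner_self_eq_norm_sq]
      have e2 : ⟪pp - p.2, d⟫ = ⟪q - pp, p.2 - pp⟫ := by
        rw [hd, show pp - p.2 = -(p.2 - pp) from by abel,
          show pp - q = -(q - pp) from by abel, inner_neg_neg, real_inner_comm]
      rw [e1, e2]
      linarith
    -- choice of step size
    set inact : Finset (X × X) := s.filter (fun p => ¬ (g p q = m)) with hinact
    set B : X × X → ℝ := fun p => 2 * |⟪q - p.2, d⟫| + ‖d‖ ^ 2 + 1 with hB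
    have hBpos : ∀ p, 0 < B p := fun p => by
      have := abs_nonneg (⟪q - p.2, d⟫); have := sq_nonneg ‖d‖; simp only [hB]; linarith
    set cand : Finset ℝ := insert 1 (inact.image (fun p => (m - g p q) / B p)) with hcand
    have hcand_ne : cand.Nonempty := ⟨1, Finset.mem_insert_self _ _⟩
    set t : ℝ := cand.min' hcand_ne with htdef
    have hinact_lt : ∀ p ∈ inact, g p q < m := by
      intro p hp
      obtain ⟨hps, hpne⟩ := Finset.mem_filter.1 hp
      exact lt_of_le_of_ne (Finset.le_sup' (fun p => g p q) hps) hpne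
    have ht0 : 0 < t := by
      apply (Finset.lt_min'_iff _ _).2
      intro r hr
      rcases Finset.mem_insert.1 hr with rfl | hr
      · exact one_pos
      · obtain ⟨p, hp, rfl⟩ := Finset.mem_image.1 hr
        exact div_pos (by linarith [hinact_lt p hp]) (hBpos p)
    have ht1 : t ≤ 1 := Finset.min'_le _ _ (Finset.mem_insert_self _ _)
    have htle : ∀ p ∈ inact, t ≤ (m - g p q) / B p := fun p hp =>
      Finset.min'_le _ _ (Finset.mem_insert.2 (Or.inr (Finset.mem_image.2 ⟨p, hp, rfl⟩)))
    -- the improved point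
    set y : X := q + t • d with hy
    have hyK : y ∈ K := by
      have : y = q + t • (pp - q) := by rw [hy, hd]
      rw [this]
      exact (convex_convexHull ℝ _).add_smul_sub_mem hqK (hCK hppC) ⟨le_of_lt ht0, ht1⟩
    have hexp : ∀ p : X × X, g p y = g p q + 2 * t * ⟪q - p.2, d⟫ + t ^ 2 * ‖d‖ ^ 2 := by
      intro p
      simp only [hg]
      have : y - p.2 = (q - p.2) + t • d := by rw [hy]; abel
      rw [this, norm_add_sq_real, real_inner_smul_right, norm_smul]
      simp [abs_of_pos ht0]
      ring
    have hlt : ∀ p ∈ s, g p y < m := by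
      intro p hp
      by_cases hpa : g p q = m
      · have hip := hactip p (Finset.mem_filter.2 ⟨hp, hpa⟩)
        rw [hexp p, hpa]
        have h6 : t * ⟪q - p.2, d⟫ ≤ t * (-‖d‖ ^ 2) := mul_le_mul_of_nonneg_left hip ht0.le
        have h7 : t ^ 2 * ‖d‖ ^ 2 ≤ t * ‖d‖ ^ 2 := by
          nlinarith [mul_nonneg (mul_nonneg ht0.le (sub_nonneg.2 ht1)) hdn.le]
        have h8 : 0 < t * ‖d‖ ^ 2 := mul_pos ht0 hdn
        nlinarith
      · have hpi : p ∈ inact := Finset.mem_filter.2 ⟨hp, hpa⟩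
        have h1 := hinact_lt p hpi
        have h2 := htle p hpi
        have h3 := hBpos p
        have h4 : t * B p ≤ m - g p q := by
          rw [div_eq_mul_inv] at h2
          calc t * B p ≤ ((m - g p q) * (B p)⁻¹) * B p :=
                mul_le_mul_of_nonneg_right h2 (le_of_lt h3)
            _ = m - g p q := by field_simp
        rw [hexp p]
        have h5 : ⟪q - p.2, d⟫ ≤ |⟪q - p.2, d⟫| := le_abs_self _
        have h6 : t * ⟪q - p.2, d⟫ ≤ t * |⟪q - p.2, d⟫| := mul_le_mul_of_nonneg_left h5 ht0.le
        have h7 : t ^ 2 * ‖d‖ ^ 2 ≤ t * ‖d‖ ^ 2 := by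
          nlinarith [mul_nonneg (mul_nonneg ht0.le (sub_nonneg.2 ht1)) hdn.le]
        have hBexp : t * B p = 2 * (t * |⟪q - p.2, d⟫|) + t * ‖d‖ ^ 2 + t := by
          simp only [hB]; ring
        linarith
    have hfy : f y < m := (Finset.sup'_lt_iff hs).2 hlt
    have h9 : f q ≤ f y := hqmin hyK
    have h10 : m ≤ f y := le_of_eq_of_le hm h9
    linarith

/-- Minty's surjectivity theorem: for a maximally monotone operator `A` on a real
Hilbert space, `I + A` is surjective. -/
lemma pls_minty [CompleteSpace X] (A : X → Set X)
    (hmono : ∀ x1 x2 u1 u2, u1 ∈ A x1 → u2 ∈ A x2 → 0 ≤ ⟪u1 - u2, x1 - x2⟫)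
    (hmax : ∀ y v, (∀ x u, u ∈ A x → 0 ≤ ⟪v - u, y - x⟫) → v ∈ A y) (z : X) :
    ∃ y ξ, ξ ∈ A y ∧ y + ξ = z := by
  classical
  -- the graph is nonempty
  have hgr : ∃ p : X × X, p.2 ∈ A p.1 := by
    by_contra h
    push_neg at h
    exact h (0, 0) (hmax 0 0 (fun x u hu => absurd hu (h (x, u))))
  set ι : Type _ := {p : X × X // p.2 ∈ A p.1} with hι
  have : Nonempty ι := ⟨⟨hgr.choose, hgr.choose_spec⟩⟩
  set φ := InnerProductSpace.toDual ℝ X with hφ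
  set a : ι → X := fun i => i.1.1 + i.1.2 with ha
  set b : ι → X := fun i => i.1.1 - i.1.2 with hb
  set r : ι → ℝ := fun i => ‖z - a i‖ with hr
  set T : ι → Set (WeakDual ℝ X) :=
    fun i => WeakDual.toStrongDual ⁻¹' Metric.closedBall (φ (b i)) (r i) with hT
  have hclosed : ∀ i, IsClosed (T i) := fun i => WeakDual.isClosed_closedBall _ _
  obtain ⟨i₀⟩ := this
  have hcompact : IsCompact (T i₀) := by
    simp only [hT]; exact WeakDual.isCompact_closedBall (𝕜 := ℝ) (φ (b i₀)) (r i₀)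
  -- pairwise Lipschitz property of the Minty parametrization
  have hpair : ∀ i j : ι, ‖b i - b j‖ ≤ ‖a i - a j‖ := by
    intro i j
    have hm := hmono _ _ _ _ i.2 j.2
    have e1 : a i - a j = (i.1.1 - j.1.1) + (i.1.2 - j.1.2) := by simp only [ha]; abel
    have e2 : b i - b j = (i.1.1 - j.1.1) - (i.1.2 - j.1.2) := by simp only [hb]; abel
    rw [e1, e2]
    rw [← pow_le_pow_iff_left₀ (norm_nonneg _) (norm_nonneg _) (two_ne_zero)]
    rw [norm_add_sq_real, norm_sub_sq_real]
    have : ⟪i.1.1 - j.1.1, i.1.2 - j.1.2⟫ = ⟪i.1.2 - j.1.2, i.1.1 - j.1.1⟫ :=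
      real_inner_comm _ _
    linarith [hm, this ▸ hm]
  -- finite intersection property
  have hFIP : ∀ u : Finset ι, (T i₀ ∩ ⋂ i ∈ u, T i).Nonempty := by
    intro u
    set s : Finset (X × X) := (insert i₀ u).image (fun i => (a i, b i)) with hsdef
    have hsm : ∀ p ∈ s, ∀ p' ∈ s, ‖p.2 - p'.2‖ ≤ ‖p.1 - p'.1‖ := by
      intro p hp p' hp'
      obtain ⟨i, _, rfl⟩ := Finset.mem_image.1 hp
      obtain ⟨j, _, rfl⟩ := Finset.mem_image.1 hp'
      exact hpair i j
    obtain ⟨q, hq⟩ := pls_finite_kirszbraun s z hsm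
    have hball : ∀ i : ι, (a i, b i) ∈ s →
        StrongDual.toWeakDual (φ q) ∈ T i := by
      intro i hmem
      have h0 := hq _ hmem
      simp only [hT, Set.mem_preimage]
      have hid : WeakDual.toStrongDual (StrongDual.toWeakDual (φ q)) = φ q := rfl
      rw [hid, Metric.mem_closedBall, dist_eq_norm, ← map_sub φ, φ.norm_map]
      exact h0
    refine ⟨StrongDual.toWeakDual (φ q), ?_, ?_⟩
    · exact hball i₀ (Finset.mem_image.2 ⟨i₀, Finset.mem_insert_self _ _, rfl⟩)
    · rw [Set.mem_iInter₂]
      intro i hi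
      exact hball i (Finset.mem_image.2 ⟨i, Finset.mem_insert_of_mem hi, rfl⟩)
  obtain ⟨χ, -, hχ⟩ := hcompact.inter_iInter_nonempty T hclosed hFIP
  set q : X := φ.symm (WeakDual.toStrongDual χ) with hqdef
  have hq : ∀ i : ι, ‖q - b i‖ ≤ r i := by
    intro i
    have h1 : χ ∈ T i := Set.mem_iInter.1 hχ i
    have h2 : ‖WeakDual.toStrongDual χ - φ (b i)‖ ≤ r i := by
      rw [← dist_eq_norm, ← Metric.mem_closedBall]
      exact h1
    have h3 : φ q = WeakDual.toStrongDual χ := φ.apply_symm_apply _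
    rw [← h3, ← map_sub φ, φ.norm_map] at h2
    exact h2
  -- construct the solution
  refine ⟨(2:ℝ)⁻¹ • (z + q), (2:ℝ)⁻¹ • (z - q), ?_, ?_⟩
  · apply hmax
    intro x u hu
    set y : X := (2:ℝ)⁻¹ • (z + q) with hy
    set ξ : X := (2:ℝ)⁻¹ • (z - q) with hξ
    have hyz : y + ξ = z := by
      rw [hy, hξ, ← smul_add, show z + q + (z - q) = (2:ℝ) • z from by
        rw [two_smul]; abel, smul_smul]
      norm_num
    have hyq : y - ξ = q := by
      rw [hy, hξ, ← smul_sub, show z + q - (z - q) = (2:ℝ) • q from by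
        rw [two_smul]; abel, smul_smul]
      norm_num
    have h1 : z - (x + u) = (y - x) + (ξ - u) := by rw [← hyz]; abel
    have h2 : q - (x - u) = (y - x) - (ξ - u) := by rw [← hyq]; abel
    have h3 : ‖q - (x - u)‖ ≤ ‖z - (x + u)‖ := hq ⟨(x, u), hu⟩
    rw [h1, h2] at h3
    have h4 : ‖(y - x) - (ξ - u)‖ ^ 2 ≤ ‖(y - x) + (ξ - u)‖ ^ 2 :=
      pow_le_pow_left₀ (norm_nonneg _) h3 2
    rw [norm_add_sq_real, norm_sub_sq_real] at h4
    have h5 : ⟪ξ - u, y - x⟫ = ⟪y - x, ξ - u⟫ := real_inner_comm _ _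
    linarith
  · rw [← smul_add, show z + q + (z - q) = (2:ℝ) • z from by rw [two_smul]; abel, smul_smul]
    norm_num

/-- Scaled Minty: surjectivity of `I + s • A`. -/
lemma pls_minty_scaled [CompleteSpace X] (A : X → Set X)
    (hmono : ∀ x1 x2 u1 u2, u1 ∈ A x1 → u2 ∈ A x2 → 0 ≤ ⟪u1 - u2, x1 - x2⟫)
    (hmax : ∀ y v, (∀ x u, u ∈ A x → 0 ≤ ⟪v - u, y - x⟫) → v ∈ A y)
    {s : ℝ} (hs : 0 < s) (z : X) :
    ∃ y ξ, ξ ∈ A y ∧ y + s • ξ = z := by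
  set A' : X → Set X := fun y => (s • ·) '' A y with hA'
  have hmono' : ∀ x1 x2 u1 u2, u1 ∈ A' x1 → u2 ∈ A' x2 → 0 ≤ ⟪u1 - u2, x1 - x2⟫ := by
    rintro x1 x2 _ _ ⟨u1, hu1, rfl⟩ ⟨u2, hu2, rfl⟩
    rw [← smul_sub, real_inner_smul_left]
    exact mul_nonneg hs.le (hmono _ _ _ _ hu1 hu2)
  have hmax' : ∀ y v, (∀ x u, u ∈ A' x → 0 ≤ ⟪v - u, y - x⟫) → v ∈ A' y := by
    intro y v h
    refine ⟨s⁻¹ • v, hmax y (s⁻¹ • v) ?_, by simp [smul_inv_smul₀ hs.ne']⟩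
    intro x u hu
    have h1 := h x (s • u) ⟨u, hu, rfl⟩
    have h2 : s⁻¹ • v - u = s⁻¹ • (v - s • u) := by
      rw [smul_sub, inv_smul_smul₀ hs.ne']
    rw [h2, real_inner_smul_left]
    exact mul_nonneg (inv_nonneg.2 hs.le) h1
  obtain ⟨y, ξ', hξ', hsum⟩ := pls_minty A' hmono' hmax' z
  obtain ⟨ξ, hξ, rfl⟩ := hξ'
  exact ⟨y, ξ, hξ, hsum⟩


end PLSAux

set_option maxHeartbeats 2000000 in
/-- (Well-definedness of the exact step of the
Parente–Lotito–Solodov variable metric proximal method.) For a continuous,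
symmetric, strongly positive definite, invertible linear operator `M`, a
maximally monotone `A` and `c > 0`, for every `x, η` there is a unique pair
`(y, ξ)` with `ξ ∈ A(y)` and `η = cMξ + y − x`; moreover
`y = (I + cMA)⁻¹(x + η)` (i.e. `x + η = y + cMξ`) and
`ξ = (cM)⁻¹η − (cM)⁻¹(y − x)`. -/
theorem parente_lotito_solodov_step_well_defined
    {X : Type*} [NormedAddCommGroup X] [InnerProductSpace ℝ X] [CompleteSpace X]
    (M Minv : X →L[ℝ] X)
    (hinv1 : ∀ x, Minv (M x) = x) (hinv2 : ∀ x, M (Minv x) = x)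
    (hsym : ∀ x y, ⟪M x, y⟫ = ⟪x, M y⟫)
    (hstrong : ∃ β > 0, ∀ x, β * ‖x‖ ^ 2 ≤ ⟪M x, x⟫)
    (A : X → Set X)
    (hmono : ∀ x1 x2 u1 u2, u1 ∈ A x1 → u2 ∈ A x2 → 0 ≤ ⟪u1 - u2, x1 - x2⟫)
    (hmax : ∀ y v, (∀ x u, u ∈ A x → 0 ≤ ⟪v - u, y - x⟫) → v ∈ A y)
    (c : ℝ) (hc : 0 < c) (x η : X) :
    (∃! p : X × X, p.2 ∈ A p.1 ∧ η = c • M p.2 + p.1 - x) ∧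
    (∀ y ξ, ξ ∈ A y → η = c • M ξ + y - x →
      x + η = y + c • M ξ ∧ ξ = c⁻¹ • Minv η - c⁻¹ • Minv (y - x)) := by
  obtain ⟨β, hβ, hst⟩ := hstrong
  -- ## Existence of a solution
  set ζ : X := Minv (x + η) with hζ
  -- strong positivity of Minv
  set Cb : ℝ := ‖M‖ + 1 with hCb
  have hCb0 : 0 < Cb := by positivity
  have hMv : ∀ v : X, ‖v‖ ≤ Cb * ‖Minv v‖ := by
    intro v
    calc ‖v‖ = ‖M (Minv v)‖ := by rw [hinv2]
      _ ≤ ‖M‖ * ‖Minv v‖ := M.le_opNorm _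
      _ ≤ Cb * ‖Minv v‖ := by
          apply mul_le_mul_of_nonneg_right _ (norm_nonneg _)
          rw [hCb]; linarith
  set α0 : ℝ := β / Cb ^ 2 with hα0def
  have hα00 : 0 < α0 := div_pos hβ (by positivity)
  have hαv : ∀ v : X, α0 * ‖v‖ ^ 2 ≤ ⟪Minv v, v⟫ := by
    intro v
    have h1 : ⟪Minv v, v⟫ = ⟪M (Minv v), Minv v⟫ := by
      nth_rewrite 2 [← hinv2 v]
      exact (hsym (Minv v) (Minv v)).symm
    have h2 : β * ‖Minv v‖ ^ 2 ≤ ⟪Minv v, v⟫ := h1 ▸ hst (Minv v)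
    have h3 : ‖v‖ ^ 2 ≤ Cb ^ 2 * ‖Minv v‖ ^ 2 := by
      calc ‖v‖ ^ 2 ≤ (Cb * ‖Minv v‖) ^ 2 := pow_le_pow_left₀ (norm_nonneg v) (hMv v) 2
        _ = Cb ^ 2 * ‖Minv v‖ ^ 2 := by ring
    have h4 : α0 * Cb ^ 2 = β := div_mul_cancel₀ β (by positivity)
    nlinarith [mul_le_mul_of_nonneg_left h3 hα00.le]
  set L : ℝ := ‖Minv‖ + 1 with hL
  have hL0 : 0 < L := by positivity
  have hLv : ∀ v : X, ‖Minv v‖ ≤ L * ‖v‖ := by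
    intro v
    calc ‖Minv v‖ ≤ ‖Minv‖ * ‖v‖ := Minv.le_opNorm _
      _ ≤ L * ‖v‖ := mul_le_mul_of_nonneg_right (by rw [hL]; linarith) (norm_nonneg _)
  set α : ℝ := min α0 (L / 2) with hαdef
  have hα0 : 0 < α := lt_min hα00 (by positivity)
  have hαL : α < L := lt_of_le_of_lt (min_le_right _ _) (by linarith)
  have hαv' : ∀ v : X, α * ‖v‖ ^ 2 ≤ ⟪Minv v, v⟫ := fun v =>
    le_trans (mul_le_mul_of_nonneg_right (min_le_left _ _) (sq_nonneg _)) (hαv v)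
  set ρ : ℝ := L ^ 2 / α with hρdef
  have hρ0 : 0 < ρ := div_pos (by positivity) hα0
  have hρinv : ρ⁻¹ = α / L ^ 2 := by rw [hρdef, inv_div]
  set k2 : ℝ := 1 - α ^ 2 / L ^ 2 with hk2def
  have hk20 : 0 < k2 := by
    rw [hk2def]
    have : α ^ 2 < L ^ 2 := by nlinarith
    have hL2 : (0:ℝ) < L ^ 2 := by positivity
    have := div_lt_one hL2 |>.2 this
    linarith
  have hk21 : k2 < 1 := by
    rw [hk2def]
    have : 0 < α ^ 2 / L ^ 2 := by positivity
    linarith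
  set k : ℝ := Real.sqrt k2 with hkdef
  have hk0 : 0 ≤ k := Real.sqrt_nonneg _
  have hksq : k ^ 2 = k2 := Real.sq_sqrt hk20.le
  have hk1 : k < 1 := by nlinarith
  set g : X → X := fun y => y - ρ⁻¹ • (Minv y - ζ) with hgdef
  have hglip : ∀ y1 y2 : X, ‖g y1 - g y2‖ ≤ k * ‖y1 - y2‖ := by
    intro y1 y2
    set d : X := y1 - y2 with hd
    have hdiff : g y1 - g y2 = d - ρ⁻¹ • Minv d := by
      simp only [hgdef, hd, map_sub, smul_sub]
      abel
    have hsq : ‖g y1 - g y2‖ ^ 2 ≤ k2 * ‖d‖ ^ 2 := by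
      rw [hdiff, norm_sub_sq_real, real_inner_smul_right]
      have e1 : ⟪d, Minv d⟫ = ⟪Minv d, d⟫ := real_inner_comm _ _
      have b1 : α * ‖d‖ ^ 2 ≤ ⟪Minv d, d⟫ := hαv' d
      have b2 : ‖Minv d‖ ≤ L * ‖d‖ := hLv d
      have b2' : ‖Minv d‖ ^ 2 ≤ L ^ 2 * ‖d‖ ^ 2 := by
        calc ‖Minv d‖ ^ 2 ≤ (L * ‖d‖) ^ 2 := pow_le_pow_left₀ (norm_nonneg _) b2 2
          _ = L ^ 2 * ‖d‖ ^ 2 := by ring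
      have hρi0 : 0 < ρ⁻¹ := inv_pos.2 hρ0
      have key : ‖d‖ ^ 2 - 2 * (ρ⁻¹ * ⟪Minv d, d⟫) + ρ⁻¹ ^ 2 * ‖Minv d‖ ^ 2
          ≤ k2 * ‖d‖ ^ 2 := by
        have c1 : ρ⁻¹ * (α * ‖d‖ ^ 2) ≤ ρ⁻¹ * ⟪Minv d, d⟫ :=
          mul_le_mul_of_nonneg_left b1 hρi0.le
        have c2 : ρ⁻¹ ^ 2 * ‖Minv d‖ ^ 2 ≤ ρ⁻¹ ^ 2 * (L ^ 2 * ‖d‖ ^ 2) :=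
          mul_le_mul_of_nonneg_left b2' (by positivity)
        have c3 : (1 : ℝ) - 2 * (ρ⁻¹ * α) + ρ⁻¹ ^ 2 * L ^ 2 = k2 := by
          rw [hρinv, hk2def]
          field_simp
          ring
        nlinarith [sq_nonneg ‖d‖]
      calc ‖d‖ ^ 2 - 2 * (ρ⁻¹ * ⟪d, Minv d⟫) + ‖ρ⁻¹ • Minv d‖ ^ 2
          = ‖d‖ ^ 2 - 2 * (ρ⁻¹ * ⟪Minv d, d⟫) + ρ⁻¹ ^ 2 * ‖Minv d‖ ^ 2 := by
            rw [e1, norm_smul, Real.norm_eq_abs, abs_of_pos hρi0, mul_pow]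
        _ ≤ k2 * ‖d‖ ^ 2 := key
    have h2 : ‖g y1 - g y2‖ ^ 2 ≤ (k * ‖d‖) ^ 2 := by
      rw [mul_pow, hksq]; exact hsq
    have h3 : 0 ≤ k * ‖d‖ := mul_nonneg hk0 (norm_nonneg _)
    exact (pow_le_pow_iff_left₀ (norm_nonneg _) h3 two_ne_zero).1 h2
  -- the resolvent
  set s0 : ℝ := c / ρ with hs0def
  have hs00 : 0 < s0 := div_pos hc hρ0
  have hres : ∀ w : X, ∃ p : X × X, p.2 ∈ A p.1 ∧ p.1 + s0 • p.2 = w := by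
    intro w
    obtain ⟨y, ξ, h1, h2⟩ := pls_minty_scaled A hmono hmax hs00 w
    exact ⟨(y, ξ), h1, h2⟩
  choose P hP1 hP2 using hres
  have hRlip : ∀ w1 w2 : X, ‖(P w1).1 - (P w2).1‖ ≤ ‖w1 - w2‖ := by
    intro w1 w2
    set dy : X := (P w1).1 - (P w2).1 with hdy
    have hmono0 : 0 ≤ ⟪(P w1).2 - (P w2).2, dy⟫ := hmono _ _ _ _ (hP1 w1) (hP1 w2)
    have hsub : dy + s0 • ((P w1).2 - (P w2).2) = w1 - w2 := by
      conv_rhs => rw [← hP2 w1, ← hP2 w2]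
      rw [hdy, smul_sub]
      abel
    have h1 : ‖dy‖ ^ 2 ≤ ⟪dy, w1 - w2⟫ := by
      have e : ⟪dy, w1 - w2⟫ = ‖dy‖ ^ 2 + s0 * ⟪(P w1).2 - (P w2).2, dy⟫ := by
        rw [← hsub, inner_add_right, real_inner_self_eq_norm_sq, real_inner_smul_right,
          real_inner_comm]
      rw [e]
      nlinarith [mul_nonneg hs00.le hmono0]
    have h2 : ⟪dy, w1 - w2⟫ ≤ ‖dy‖ * ‖w1 - w2‖ := real_inner_le_norm _ _
    rcases eq_or_lt_of_le (norm_nonneg dy) with h0 | h0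
    · rw [← h0]; exact norm_nonneg _
    · have : ‖dy‖ * ‖dy‖ ≤ ‖dy‖ * ‖w1 - w2‖ := by nlinarith
      exact le_of_mul_le_mul_left this h0
  -- the contraction
  set F : X → X := fun y => (P (g y)).1 with hFdef
  have hFlip : ∀ y1 y2 : X, dist (F y1) (F y2) ≤ k * dist y1 y2 := by
    intro y1 y2
    rw [dist_eq_norm, dist_eq_norm]
    exact le_trans (hRlip (g y1) (g y2)) (hglip y1 y2)
  have hcontr : ContractingWith k.toNNReal F := by
    constructor
    · rw [← NNReal.coe_lt_coe, Real.coe_toNNReal _ hk0]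
      exact_mod_cast hk1
    · apply LipschitzWith.of_dist_le_mul
      intro a b
      rw [Real.coe_toNNReal _ hk0]
      exact hFlip a b
  have : Nonempty X := ⟨0⟩
  set ys : X := ContractingWith.fixedPoint F hcontr with hys
  have hfix : F ys = ys := ContractingWith.fixedPoint_isFixedPt hcontr
  set ξs : X := (P (g ys)).2 with hξs
  have hmem : ξs ∈ A ys := by
    have := hP1 (g ys)
    rwa [show (P (g ys)).1 = ys from hfix] at this
  have heqn : ys + c • M ξs = x + η := by
    have h1 : ys + s0 • ξs = g ys := by
      have := hP2 (g ys)
      rwa [show (P (g ys)).1 = ys from hfix] at this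
    have h2 : s0 • ξs = -(ρ⁻¹ • (Minv ys - ζ)) := by
      have : ys + s0 • ξs = ys - ρ⁻¹ • (Minv ys - ζ) := h1
      have := sub_eq_of_eq_add' this.symm
      rw [← this]; abel
    have h3 : c • ξs = ζ - Minv ys := by
      have := congrArg (fun v => ρ • v) h2
      simp only [smul_smul, smul_neg] at this
      rw [show ρ * s0 = c from by rw [hs0def]; field_simp, show ρ * ρ⁻¹ = 1 from
        mul_inv_cancel₀ hρ0.ne'] at this
      rw [this, one_smul, neg_sub]
    have h4 : Minv ys + c • ξs = Minv (x + η) := by rw [h3, hζ]; abel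
    have h5 := congrArg M h4
    rwa [map_add, map_smul, hinv2, hinv2] at h5
  have hsol : ξs ∈ A ys ∧ η = c • M ξs + ys - x := by
    refine ⟨hmem, ?_⟩
    have : η = ys + c • M ξs - x := by rw [heqn]; abel
    rw [this]; abel
  -- ## Conclusion
  constructor
  · refine ⟨(ys, ξs), hsol, ?_⟩
    rintro ⟨y, ξ⟩ ⟨hξA, hηeq⟩
    have he : c • M ξ + y = c • M ξs + ys := by
      have h1 : c • M ξ + y - x = c • M ξs + ys - x := by rw [← hηeq, hsol.2]
      have := congrArg (fun v => v + x) h1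
      simpa [sub_add_cancel] using this
    have hmono1 : 0 ≤ ⟪ξ - ξs, y - ys⟫ := hmono _ _ _ _ hξA hmem
    have hyy : y - ys = c • M (ξs - ξ) := by
      rw [map_sub, smul_sub]
      have h2 : y = c • M ξs + ys - c • M ξ := by rw [← he]; abel
      rw [h2]; abel
    have hkey : ⟪ξ - ξs, y - ys⟫ = -(c * ⟪M (ξ - ξs), ξ - ξs⟫) := by
      rw [hyy, show ξs - ξ = -(ξ - ξs) from by abel, map_neg, smul_neg, inner_neg_right,
        real_inner_smul_right]
      congr 1
      rw [real_inner_comm, hsym]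
    have hβb := hst (ξ - ξs)
    have hzero : ξ - ξs = 0 := by
      by_contra hne
      have : 0 < ‖ξ - ξs‖ := norm_pos_iff.2 (sub_ne_zero.2 fun h => hne (by rw [h, sub_self]))
      nlinarith [hmono1, hkey, hβb, mul_pos hc (mul_pos hβ (mul_pos this this))]
    have hξeq : ξ = ξs := by rwa [sub_eq_zero] at hzero
    have hyeq : y = ys := by
      have := he
      rw [hξeq] at this
      have := add_left_cancel this
      exact this
    exact Prod.ext hyeq hξeq
  · -- formulas
    intro y ξ hξA hηeq
    constructor
    · rw [hηeq]; abel
    · have h1 : Minv η = c • ξ + Minv (y - x) := by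
        rw [hηeq, show c • M ξ + y - x = c • M ξ + (y - x) from by abel, map_add, map_smul,
          hinv1]
      rw [h1, smul_add, smul_smul, inv_mul_cancel₀ hc.ne', one_smul]
      abel
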